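/- A numerical semigroup S (with S ≠ ℕ) belongs to an infinite chain in the semigroup tree if and only if the nonzero left elements of S are not coprime, i.e., if and only if gcd(L(S) \ {0}) ≠ 1. -/
import Mathlib


/-- A numerical semigroup: an additive submonoid of ℕ with finite complement. -/
structure NumericalSemigroup where
  carrier : Set ℕ
  zero_mem : 0 ∈ carrier
  add_mem : ∀ ⦃a b : ℕ⦄, a ∈ carrier → b ∈ carrier → a + b ∈ carrier
  cofinite : (carrierᶜ : Set ℕ).Finite

namespace NumericalSemigroup

/-- The genus: the number of gaps. -/
noncomputable def genus (S : NumericalSemigroup) : ℕ := S.carrierᶜ.ncard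

/-- The multiplicity: the smallest nonzero element. -/
noncomputable def multiplicity (S : NumericalSemigroup) : ℕ :=
  sInf {n : ℕ | n ∈ S.carrier ∧ n ≠ 0}

/-- The Frobenius number: the largest gap. -/
noncomputable def frobenius (S : NumericalSemigroup) : ℕ := sSup S.carrierᶜ

/-- The left elements: the elements of `S` smaller than the Frobenius number. -/
def leftElements (S : NumericalSemigroup) : Set ℕ :=
  {s : ℕ | s ∈ S.carrier ∧ s < S.frobenius}

end NumericalSemigroup

/-- The gcd of a set of natural numbers: the common divisor that is divisible by
every common divisor (so `setGcd ∅ = 0`). -/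
noncomputable def setGcd (A : Set ℕ) : ℕ :=
  sInf {d : ℕ | (∀ a ∈ A, d ∣ a) ∧ ∀ e : ℕ, (∀ a ∈ A, e ∣ a) → e ∣ d}

/-- The constant γ = (5 + √5)/10. -/
noncomputable def gamma : ℝ := (5 + Real.sqrt 5) / 10

/-- `S` belongs to an infinite chain in the semigroup tree. -/
def InInfiniteChain (S : NumericalSemigroup) : Prop :=
  ∃ f : ℕ → NumericalSemigroup, f 0 = S ∧
    ∀ i : ℕ, (f (i + 1)).carrier ≠ Set.univ ∧
      (f i).carrier = (f (i + 1)).carrier ∪ {(f (i + 1)).frobenius}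

/-! ### Auxiliary lemmas -/

lemma setGcd_finite_eq {A : Set ℕ} (hA : A.Finite) :
    setGcd A = hA.toFinset.gcd id := by
  have hg : (∀ a ∈ A, hA.toFinset.gcd id ∣ a) ∧
      ∀ e : ℕ, (∀ a ∈ A, e ∣ a) → e ∣ hA.toFinset.gcd id := by
    constructor
    · intro a ha
      simpa using Finset.gcd_dvd (f := id) (by simpa using ha : a ∈ hA.toFinset)
    · intro e he
      exact Finset.dvd_gcd fun b hb => he b (by simpa using hb)
  have hset : {d : ℕ | (∀ a ∈ A, d ∣ a) ∧ ∀ e : ℕ, (∀ a ∈ A, e ∣ a) → e ∣ d}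
      = {hA.toFinset.gcd id} := by
    ext d
    simp only [Set.mem_setOf_eq, Set.mem_singleton_iff]
    constructor
    · rintro ⟨h1, h2⟩
      exact Nat.dvd_antisymm (hg.2 _ h1) (h2 _ hg.1)
    · rintro rfl; exact hg
  rw [setGcd, hset, csInf_singleton]

lemma bezout_closure (T : Finset ℕ) :
    ∃ p q : ℕ, p ∈ AddSubmonoid.closure (T : Set ℕ) ∧ q ∈ AddSubmonoid.closure (T : Set ℕ) ∧
      p = q + T.gcd id := by
  classical
  induction T using Finset.induction_on with
  | empty => exact ⟨0, 0, zero_mem _, zero_mem _, by simp⟩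
  | @insert a B ha IH =>
    obtain ⟨p', q', hp', hq', heq⟩ := IH
    have hmono : AddSubmonoid.closure (B : Set ℕ) ≤ AddSubmonoid.closure ((insert a B : Finset ℕ) : Set ℕ) := by
      apply AddSubmonoid.closure_mono
      intro x hx; simp at hx ⊢; tauto
    have hamem : a ∈ AddSubmonoid.closure ((insert a B : Finset ℕ) : Set ℕ) := by
      apply AddSubmonoid.subset_closure; simp
    have hgcd : (insert a B).gcd id = Nat.gcd a (B.gcd id) := by
      rw [Finset.gcd_insert]; rfl
    set d' := B.gcd id with hd'
    rcases Nat.eq_zero_or_pos a with ha0 | hapos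
    · refine ⟨p', q', hmono hp', hmono hq', ?_⟩
      rw [hgcd, ha0, Nat.gcd_zero_left]; exact heq
    rcases Nat.eq_zero_or_pos d' with hd0 | hdpos
    · refine ⟨a, 0, hamem, zero_mem _, ?_⟩
      rw [hgcd, hd0, Nat.gcd_zero_right]; omega
    -- main case
    set g := Nat.gcd a d' with hgdef
    have hBez : (g : ℤ) = a * Nat.gcdA a d' + d' * Nat.gcdB a d' := Nat.gcd_eq_gcd_ab a d'
    set u := Nat.gcdA a d'
    set v := Nat.gcdB a d'
    set k : ℤ := u.natAbs + v.natAbs with hk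
    have habs_u : -(u.natAbs : ℤ) ≤ u := by
      rw [Int.natCast_natAbs]; exact neg_abs_le u
    have habs_v : v ≤ (v.natAbs : ℤ) := Int.le_natAbs
    have hnn_u : (0:ℤ) ≤ (u.natAbs : ℤ) := Int.natCast_nonneg _
    have hnn_v : (0:ℤ) ≤ (v.natAbs : ℤ) := Int.natCast_nonneg _
    have hd1 : (1:ℤ) ≤ d' := by exact_mod_cast hdpos
    have ha1 : (1:ℤ) ≤ a := by exact_mod_cast hapos
    have hU : 0 ≤ u + k * d' := by
      have h1 : (u.natAbs : ℤ) ≤ k := by rw [hk]; linarith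
      nlinarith
    have hW : 0 ≤ k * a - v := by
      have h1 : (v.natAbs : ℤ) ≤ k := by rw [hk]; linarith
      nlinarith
    set U : ℕ := (u + k * d').toNat with hUdef
    set W : ℕ := (k * a - v).toNat with hWdef
    have hkey : g + W * d' = U * a := by
      have hUz : (U : ℤ) = u + k * d' := Int.toNat_of_nonneg hU
      have hWz : (W : ℤ) = k * a - v := Int.toNat_of_nonneg hW
      have : (g : ℤ) + W * d' = U * a := by rw [hUz, hWz]; linarith [hBez]
      exact_mod_cast this
    refine ⟨U * a + W * q', W * p', ?_, ?_, ?_⟩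
    · exact add_mem (by simpa using nsmul_mem hamem U)
        (by simpa using nsmul_mem (hmono hq') W)
    · simpa using nsmul_mem (hmono hp') W
    · rw [hgcd, heq]
      ring_nf
      ring_nf at hkey
      linarith

lemma eventually_mem_closure (T : Finset ℕ) (hT : T.gcd id = 1) :
    ∃ N : ℕ, ∀ n ≥ N, n ∈ AddSubmonoid.closure (T : Set ℕ) := by
  obtain ⟨p, q, hp, hq, heq⟩ := bezout_closure T
  rw [hT] at heq
  refine ⟨q * q, fun n hn => ?_⟩
  rcases Nat.eq_zero_or_pos q with hq0 | hqpos
  · subst hq0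
    have hp1 : p = 1 := by omega
    subst hp1
    have : n • (1:ℕ) ∈ AddSubmonoid.closure (T : Set ℕ) := nsmul_mem hp n
    simpa using this
  · set k := n / q with hk
    set r := n % q with hr
    have hdm : q * k + r = n := Nat.div_add_mod n q
    have hrq : r < q := Nat.mod_lt _ hqpos
    have hkq : q ≤ k := by
      rw [hk]
      exact Nat.le_div_iff_mul_le hqpos |>.mpr (by nlinarith)
    have hrk : r ≤ k := by omega
    have hid : (k - r) * q + r * p = n := by
      rw [heq]
      have : (k - r) * q + r * (q + 1) = ((k - r) + r) * q + r := by ring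
      rw [this, Nat.sub_add_cancel hrk]
      linarith
    rw [← hid]
    exact add_mem (by simpa using nsmul_mem hq (k - r)) (by simpa using nsmul_mem hp r)

namespace NumericalSemigroup

lemma ext' {S T : NumericalSemigroup} (h : S.carrier = T.carrier) : S = T := by
  cases S; cases T; cases h; rfl

lemma compl_nonempty {S : NumericalSemigroup} (h : S.carrier ≠ Set.univ) :
    S.carrierᶜ.Nonempty := by
  rwa [Set.nonempty_compl]

lemma frobenius_mem_compl {S : NumericalSemigroup} (h : S.carrier ≠ Set.univ) :
    S.frobenius ∈ S.carrierᶜ :=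
  Set.Nonempty.csSup_mem (compl_nonempty h) S.cofinite

lemma mem_of_frobenius_lt {S : NumericalSemigroup} {n : ℕ} (hn : S.frobenius < n) :
    n ∈ S.carrier := by
  by_contra hc
  have : n ≤ S.frobenius := le_csSup S.cofinite.bddAbove hc
  omega

lemma frobenius_eq {S : NumericalSemigroup} {x : ℕ} (hmem : x ∈ S.carrierᶜ)
    (hub : ∀ y ∈ S.carrierᶜ, y ≤ x) : S.frobenius = x :=
  le_antisymm (csSup_le ⟨x, hmem⟩ hub) (le_csSup S.cofinite.bddAbove hmem)

end NumericalSemigroup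

section Construction

variable (S : NumericalSemigroup) (d : ℕ)

/-- The sequence of removed elements: `tseq 0 = F(S)` and `tseq (i+1)` is the smallest
number above `tseq i` not divisible by `d`. -/
noncomputable def tseq : ℕ → ℕ
  | 0 => S.frobenius
  | (i + 1) => sInf {n : ℕ | tseq i < n ∧ ¬ d ∣ n}

lemma tset_nonempty (hd : d ≠ 1) (m : ℕ) : {n : ℕ | m < n ∧ ¬ d ∣ n}.Nonempty := by
  by_cases h1 : d ∣ (m + 1)
  · refine ⟨m + 2, by omega, fun h2 => hd ?_⟩
    have hd1 : d ∣ 1 := by simpa using Nat.dvd_sub h2 h1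
    exact Nat.dvd_one.mp hd1
  · exact ⟨m + 1, by omega, h1⟩

end Construction

section ConstructionProps

variable {S : NumericalSemigroup} {d : ℕ}

lemma tseq_succ_spec (hd : d ≠ 1) (i : ℕ) :
    tseq S d i < tseq S d (i + 1) ∧ ¬ d ∣ tseq S d (i + 1) :=
  Nat.sInf_mem (tset_nonempty d hd (tseq S d i))

lemma tseq_succ_min (hd : d ≠ 1) {i n : ℕ} (h1 : tseq S d i < n) (h2 : ¬ d ∣ n) :
    tseq S d (i + 1) ≤ n :=
  Nat.sInf_le ⟨h1, h2⟩

lemma frobenius_le_tseq (hd : d ≠ 1) (i : ℕ) : S.frobenius ≤ tseq S d i := by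
  induction i with
  | zero => exact le_rfl
  | succ i ih => exact le_trans ih (le_of_lt (tseq_succ_spec hd i).1)

/-- The carrier of the `i`-th semigroup in the constructed chain. -/
def Aset (S : NumericalSemigroup) (d i : ℕ) : Set ℕ :=
  {n : ℕ | (n ∈ S.carrier ∧ n ≤ S.frobenius) ∨ (S.frobenius < n ∧ d ∣ n) ∨ tseq S d i < n}

lemma dvd_of_mem_Aset (h : S.carrier ≠ Set.univ)
    (hdvd : ∀ a ∈ S.leftElements \ {0}, d ∣ a) {i x : ℕ}
    (hx : x ∈ Aset S d i) (hle : x ≤ tseq S d i) : d ∣ x := by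
  rcases hx with ⟨hxS, hxF⟩ | ⟨_, hdx⟩ | hgt
  · rcases Nat.eq_zero_or_pos x with rfl | hpos
    · exact dvd_zero d
    · have hxne : x ≠ S.frobenius := fun he =>
        (NumericalSemigroup.frobenius_mem_compl h) (he ▸ hxS)
      exact hdvd x ⟨⟨hxS, lt_of_le_of_ne hxF hxne⟩, by
        simp only [Set.mem_singleton_iff]; omega⟩
  · exact hdx
  · omega

/-- The `i`-th semigroup of the chain. -/
noncomputable def fseq (S : NumericalSemigroup) (h : S.carrier ≠ Set.univ) (d : ℕ)
    (hd : d ≠ 1) (hdvd : ∀ a ∈ S.leftElements \ {0}, d ∣ a) (i : ℕ) : NumericalSemigroup where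
  carrier := Aset S d i
  zero_mem := Or.inl ⟨S.zero_mem, Nat.zero_le _⟩
  add_mem := by
    intro a b haA hbA
    by_cases hab : tseq S d i < a + b
    · exact Or.inr (Or.inr hab)
    push_neg at hab
    have hda : d ∣ a := dvd_of_mem_Aset h hdvd haA (by omega)
    have hdb : d ∣ b := dvd_of_mem_Aset h hdvd hbA (by omega)
    by_cases habF : a + b ≤ S.frobenius
    · have hFt : S.frobenius ≤ tseq S d i := frobenius_le_tseq hd i
      have haS : a ∈ S.carrier := by
        rcases haA with ⟨h1, _⟩ | ⟨h1, _⟩ | h1 <;> first | exact h1 | omega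
      have hbS : b ∈ S.carrier := by
        rcases hbA with ⟨h1, _⟩ | ⟨h1, _⟩ | h1 <;> first | exact h1 | omega
      exact Or.inl ⟨S.add_mem haS hbS, habF⟩
    · exact Or.inr (Or.inl ⟨by omega, dvd_add hda hdb⟩)
  cofinite := by
    apply Set.Finite.subset (Set.finite_Iic (tseq S d i))
    intro n hn
    simp only [Set.mem_compl_iff, Aset, Set.mem_setOf_eq] at hn
    push_neg at hn
    exact hn.2.2

lemma tseq_notMem_Aset (hd : d ≠ 1) (i : ℕ) : tseq S d (i + 1) ∉ Aset S d (i + 1) := by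
  obtain ⟨hlt, hndvd⟩ := tseq_succ_spec (S := S) hd i
  have hF : S.frobenius ≤ tseq S d i := frobenius_le_tseq hd i
  rintro (⟨hS, hle⟩ | ⟨_, hdvd'⟩ | hgt)
  · omega
  · exact hndvd hdvd'
  · omega

end ConstructionProps

section ChainLemma

variable {S : NumericalSemigroup} {d : ℕ}

lemma Aset_zero (h : S.carrier ≠ Set.univ) : Aset S d 0 = S.carrier := by
  ext n
  simp only [Aset, tseq, Set.mem_setOf_eq]
  constructor
  · rintro (⟨h1, _⟩ | ⟨h1, _⟩ | h1)
    · exact h1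
    · exact NumericalSemigroup.mem_of_frobenius_lt h1
    · exact NumericalSemigroup.mem_of_frobenius_lt h1
  · intro hn
    by_cases hF : n ≤ S.frobenius
    · exact Or.inl ⟨hn, hF⟩
    · exact Or.inr (Or.inr (by omega))

lemma Aset_succ (hd : d ≠ 1) (i : ℕ) :
    Aset S d i = Aset S d (i + 1) ∪ {tseq S d (i + 1)} := by
  obtain ⟨hlt, hndvd⟩ := tseq_succ_spec (S := S) hd i
  have hF : S.frobenius ≤ tseq S d i := frobenius_le_tseq hd i
  ext n
  simp only [Aset, Set.mem_union, Set.mem_setOf_eq, Set.mem_singleton_iff]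
  constructor
  · rintro (h1 | h1 | h1)
    · exact Or.inl (Or.inl h1)
    · exact Or.inl (Or.inr (Or.inl h1))
    · by_cases hgt : tseq S d (i + 1) < n
      · exact Or.inl (Or.inr (Or.inr hgt))
      by_cases hdn : d ∣ n
      · exact Or.inl (Or.inr (Or.inl ⟨by omega, hdn⟩))
      · have := tseq_succ_min (S := S) hd h1 hdn
        exact Or.inr (by omega)
  · rintro ((h1 | h1 | h1) | rfl)
    · exact Or.inl h1
    · exact Or.inr (Or.inl h1)
    · exact Or.inr (Or.inr (by omega))
    · exact Or.inr (Or.inr hlt)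

lemma chain_of_dvd (h : S.carrier ≠ Set.univ) (hd : d ≠ 1)
    (hdvd : ∀ a ∈ S.leftElements \ {0}, d ∣ a) : InInfiniteChain S := by
  refine ⟨fseq S h d hd hdvd, ?_, ?_⟩
  · exact NumericalSemigroup.ext' (Aset_zero h)
  · intro i
    have hnotmem := tseq_notMem_Aset (S := S) (d := d) hd i
    have hcar : (fseq S h d hd hdvd (i + 1)).carrier = Aset S d (i + 1) := rfl
    constructor
    · rw [hcar]
      intro hu
      exact hnotmem (hu ▸ Set.mem_univ _)
    · have hfrob : (fseq S h d hd hdvd (i + 1)).frobenius = tseq S d (i + 1) := by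
        apply NumericalSemigroup.frobenius_eq
        · exact hnotmem
        · intro y hy
          by_contra hgt
          push_neg at hgt
          exact hy (Or.inr (Or.inr hgt))
      show Aset S d i = Aset S d (i + 1) ∪ {(fseq S h d hd hdvd (i + 1)).frobenius}
      rw [hfrob]
      exact Aset_succ hd i

end ChainLemma

theorem inInfiniteChain_iff_gcd_ne_one (S : NumericalSemigroup) (h : S.carrier ≠ Set.univ) :
    InInfiniteChain S ↔ setGcd (S.leftElements \ {0}) ≠ 1 := by
  have hLfin : (S.leftElements \ {0}).Finite :=
    (Set.finite_Iio S.frobenius).subset (fun x hx => hx.1.2)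
  constructor
  · rintro ⟨f, hf0, hf⟩ hgcd
    have hT : hLfin.toFinset.gcd id = 1 := by
      rw [← setGcd_finite_eq hLfin]; exact hgcd
    obtain ⟨N, hN⟩ := eventually_mem_closure _ hT
    have hne : ∀ i, (f i).carrier ≠ Set.univ := by
      intro i; cases i with
      | zero => rw [hf0]; exact h
      | succ j => exact (hf j).1
    have hmono : ∀ i, (f i).frobenius < (f (i + 1)).frobenius := by
      intro i
      have h2 : (f (i + 1)).frobenius ∈ (f i).carrier := by
        rw [(hf i).2]; exact Or.inr rfl
      have hsub : (f i).carrierᶜ ⊆ (f (i + 1)).carrierᶜ :=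
        Set.compl_subset_compl.mpr (by rw [(hf i).2]; exact Set.subset_union_left)
      have h3 : (f i).frobenius ∈ (f i).carrierᶜ :=
        NumericalSemigroup.frobenius_mem_compl (hne i)
      have h4 : (f i).frobenius ≤ (f (i + 1)).frobenius :=
        le_csSup (f (i + 1)).cofinite.bddAbove (hsub h3)
      rcases lt_or_eq_of_le h4 with hlt | heq
      · exact hlt
      · exfalso; rw [heq] at h3; exact h3 h2
    have hge : ∀ i, S.frobenius + i ≤ (f i).frobenius := by
      intro i; induction i with
      | zero => simp [hf0]
      | succ j ih => have := hmono j; omega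
    have hpres : ∀ i, ∀ x ∈ S.carrier, x < S.frobenius → x ∈ (f i).carrier := by
      intro i; induction i with
      | zero => intro x hx _; rw [hf0]; exact hx
      | succ j ih =>
        intro x hx hlt
        have hxj := ih x hx hlt
        rw [(hf j).2] at hxj
        rcases hxj with h1 | h1
        · exact h1
        · exfalso
          have hgj := hge (j + 1)
          have : x = (f (j + 1)).frobenius := h1
          omega
    have hFiN : N ≤ (f N).frobenius := by have := hge N; omega
    have hcl : (f N).frobenius ∈ AddSubmonoid.closure (hLfin.toFinset : Set ℕ) :=
      hN _ hFiN
    let M : AddSubmonoid ℕ :=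
      ⟨⟨(f N).carrier, fun {a b} ha hb => (f N).add_mem ha hb⟩, (f N).zero_mem⟩
    have hsubT : (hLfin.toFinset : Set ℕ) ⊆ M := by
      intro x hx
      rw [Finset.mem_coe, Set.Finite.mem_toFinset] at hx
      exact hpres N x hx.1.1 hx.1.2
    have hle : AddSubmonoid.closure (hLfin.toFinset : Set ℕ) ≤ M :=
      AddSubmonoid.closure_le.mpr hsubT
    exact NumericalSemigroup.frobenius_mem_compl (hne N) (hle hcl)
  · intro hgcd
    refine chain_of_dvd h hgcd ?_
    intro a ha
    rw [setGcd_finite_eq hLfin]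
    simpa using Finset.gcd_dvd (f := id) (Set.Finite.mem_toFinset hLfin |>.mpr ha)
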